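/- Let K be a field and I = (x_1^2 x_2, x_2^2 x_3, x_1 x_3^2) ⊆ K[x_1, x_2, x_3]. Then I does not contain a regular sequence f, g of length two in which each of f and g is a product of three linear forms. -/

import Mathlib

open MvPolynomial

section Aux

variable {K : Type*} [Field K]

/-- exponent vector p,q,r as a finsupp on `Fin 3` -/
noncomputable def T (p q r : ℕ) : Fin 3 →₀ ℕ :=
  Finsupp.single 0 p + Finsupp.single 1 q + Finsupp.single 2 r

lemma T_apply0 (p q r : ℕ) : T p q r 0 = p := by simp [T, Finsupp.single_apply]
lemma T_apply1 (p q r : ℕ) : T p q r 1 = q := by simp [T, Finsupp.single_apply]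
lemma T_apply2 (p q r : ℕ) : T p q r 2 = r := by simp [T, Finsupp.single_apply]

lemma T_eq_iff {p q r p' q' r' : ℕ} :
    T p q r = T p' q' r' ↔ (p = p' ∧ q = q' ∧ r = r') := by
  constructor
  · intro h
    refine ⟨?_, ?_, ?_⟩
    · have := DFunLike.congr_fun h 0; rwa [T_apply0, T_apply0] at this
    · have := DFunLike.congr_fun h 1; rwa [T_apply1, T_apply1] at this
    · have := DFunLike.congr_fun h 2; rwa [T_apply2, T_apply2] at this
  · rintro ⟨rfl, rfl, rfl⟩; rfl

lemma not_T_le {p q r p' q' r' : ℕ} (i : Fin 3)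
    (h : T p' q' r' i < T p q r i) : ¬ T p q r ≤ T p' q' r' := fun hle =>
  absurd (Finsupp.le_def.mp hle i) (not_le.mpr h)

lemma mono3 (p q r : ℕ) :
    (X 0 : MvPolynomial (Fin 3) K) ^ p * (X 1) ^ q * (X 2) ^ r = monomial (T p q r) 1 := by
  rw [X_pow_eq_monomial, X_pow_eq_monomial, X_pow_eq_monomial, monomial_mul, monomial_mul,
    one_mul, one_mul, T]

lemma coeffT (t : K) (p q r p' q' r' : ℕ) :
    coeff (T p' q' r') (C t * ((X 0 : MvPolynomial (Fin 3) K) ^ p * (X 1) ^ q * (X 2) ^ r)) =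
      if p = p' ∧ q = q' ∧ r = r' then t else 0 := by
  rw [mono3, C_mul_monomial, mul_one, coeff_monomial]
  by_cases h : p = p' ∧ q = q' ∧ r = r'
  · rw [if_pos (T_eq_iff.mpr h), if_pos h]
  · rw [if_neg (fun he => h (T_eq_iff.mp he)), if_neg h]

lemma deg3 (m : Fin 3 →₀ ℕ) : Finsupp.degree m = m 0 + m 1 + m 2 := by
  rw [Finsupp.degree_apply, Finset.sum_subset (Finset.subset_univ _)
    (by intro x _ hx; simpa using Finsupp.notMem_support_iff.mp hx), Fin.sum_univ_three]

lemma fin3_ext {m n : Fin 3 →₀ ℕ} (h0 : m 0 = n 0) (h1 : m 1 = n 1) (h2 : m 2 = n 2) :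
    m = n := by
  ext i; fin_cases i <;> assumption

lemma hom1_struct (p : MvPolynomial (Fin 3) K) (hp : p.IsHomogeneous 1) :
    ∃ a b c : K, p = C a * X 0 + C b * X 1 + C c * X 2 := by
  refine ⟨coeff (Finsupp.single 0 1) p, coeff (Finsupp.single 1 1) p,
    coeff (Finsupp.single 2 1) p, ?_⟩
  ext m
  simp only [coeff_add, coeff_C_mul, coeff_X']
  by_cases hm : Finsupp.degree m = 1
  · have h3 := deg3 m
    rw [hm] at h3
    have hc : (m 0 = 1 ∧ m 1 = 0 ∧ m 2 = 0) ∨ (m 0 = 0 ∧ m 1 = 1 ∧ m 2 = 0)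
        ∨ (m 0 = 0 ∧ m 1 = 0 ∧ m 2 = 1) := by omega
    rcases hc with ⟨u,v,w⟩|⟨u,v,w⟩|⟨u,v,w⟩
    · have hm' : m = Finsupp.single (0 : Fin 3) 1 :=
        fin3_ext (by simp [u]) (by simp [v]) (by simp [w])
      subst hm'; simp [Finsupp.single_eq_single_iff]
    · have hm' : m = Finsupp.single (1 : Fin 3) 1 :=
        fin3_ext (by simp [u]) (by simp [v]) (by simp [w])
      subst hm'; simp [Finsupp.single_eq_single_iff]
    · have hm' : m = Finsupp.single (2 : Fin 3) 1 :=
        fin3_ext (by simp [u]) (by simp [v]) (by simp [w])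
      subst hm'; simp [Finsupp.single_eq_single_iff]
  · rw [hp.coeff_eq_zero hm]
    have h0 : ∀ i : Fin 3, Finsupp.single i 1 ≠ m := by
      intro i h
      apply hm; rw [← h, deg3]
      fin_cases i <;> simp [Finsupp.single_apply]
    rw [if_neg (h0 0), if_neg (h0 1), if_neg (h0 2)]
    ring

lemma span_coeff {f : MvPolynomial (Fin 3) K}
    (hf : f ∈ Ideal.span {(X 0) ^ 2 * X 1, (X 1) ^ 2 * X 2, X 0 * (X 2) ^ 2})
    (μ : Fin 3 →₀ ℕ) (h1 : ¬ T 2 1 0 ≤ μ) (h2 : ¬ T 0 2 1 ≤ μ) (h3 : ¬ T 1 0 2 ≤ μ) :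
    coeff μ f = 0 := by
  have hm1 : ((X 0)^2 * X 1 : MvPolynomial (Fin 3) K) = monomial (T 2 1 0) 1 := by
    have := mono3 (K := K) 2 1 0; simpa using this
  have hm2 : ((X 1)^2 * X 2 : MvPolynomial (Fin 3) K) = monomial (T 0 2 1) 1 := by
    have := mono3 (K := K) 0 2 1; rw [← this]; ring
  have hm3 : (X 0 * (X 2)^2 : MvPolynomial (Fin 3) K) = monomial (T 1 0 2) 1 := by
    have := mono3 (K := K) 1 0 2; rw [← this]; ring
  rw [show ({(X 0) ^ 2 * X 1, (X 1) ^ 2 * X 2, X 0 * (X 2) ^ 2} :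
      Set (MvPolynomial (Fin 3) K)) =
      {monomial (T 2 1 0) 1, monomial (T 0 2 1) 1, monomial (T 1 0 2) 1} by
    rw [hm1, hm2, hm3]] at hf
  rw [Ideal.mem_span_insert] at hf
  obtain ⟨p, z1, hz1, rfl⟩ := hf
  rw [Ideal.mem_span_insert] at hz1
  obtain ⟨q, z2, hz2, rfl⟩ := hz1
  rw [Ideal.mem_span_singleton'] at hz2
  obtain ⟨r, rfl⟩ := hz2
  simp only [coeff_add, mul_comm, coeff_mul_monomial', if_neg h1, if_neg h2, if_neg h3,
    add_zero, zero_add]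

/-- the key scalar lemma -/
lemma key (a1 a2 a3 b1 b2 b3 c1 c2 c3 : K)
    (h1 : a1*a2*a3 = 0) (h2 : b1*b2*b3 = 0)
    (h5 : a1*b2*b3 + b1*a2*b3 + b1*b2*a3 = 0) :
    (a1*a2*b3 + a1*b2*a3 + b1*a2*a3) * (b1*b2*c3 + b1*c2*b3 + c1*b2*b3) = 0 := by
  rcases mul_eq_zero.mp h1 with h | ha3
  · rcases mul_eq_zero.mp h with ha1 | ha2
    · rcases mul_eq_zero.mp h2 with h' | hb3
      · rcases mul_eq_zero.mp h' with hb1 | hb2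
        · subst ha1; subst hb1; ring
        · subst ha1; subst hb2; linear_combination (a3*b1*c2) * h5
      · subst ha1; subst hb3; linear_combination (a2*b1*c3) * h5
    · rcases mul_eq_zero.mp h2 with h' | hb3
      · rcases mul_eq_zero.mp h' with hb1 | hb2
        · subst ha2; subst hb1; linear_combination (a3*b2*c1) * h5
        · subst ha2; subst hb2; ring
      · subst ha2; subst hb3; linear_combination (a1*b2*c3) * h5
  · rcases mul_eq_zero.mp h2 with h' | hb3
    · rcases mul_eq_zero.mp h' with hb1 | hb2
      · subst ha3; subst hb1; linear_combination (a2*b3*c1) * h5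
      · subst ha3; subst hb2; linear_combination (a1*b3*c2) * h5
    · subst ha3; subst hb3; ring

lemma classify {f : MvPolynomial (Fin 3) K}
    (hfI : f ∈ Ideal.span {(X 0) ^ 2 * X 1, (X 1) ^ 2 * X 2, X 0 * (X 2) ^ 2})
    {l1 l2 l3 : MvPolynomial (Fin 3) K}
    (h1 : l1.IsHomogeneous 1) (h2 : l2.IsHomogeneous 1) (h3 : l3.IsHomogeneous 1)
    (hfl : f = l1 * l2 * l3) :
    (∃ A : K, f = C A * ((X 0) ^ 2 * X 1)) ∨ (∃ A : K, f = C A * ((X 1) ^ 2 * X 2)) ∨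
      (∃ A : K, f = C A * (X 0 * (X 2) ^ 2)) := by
  obtain ⟨a1, b1, c1, hl1⟩ := hom1_struct l1 h1
  obtain ⟨a2, b2, c2, hl2⟩ := hom1_struct l2 h2
  obtain ⟨a3, b3, c3, hl3⟩ := hom1_struct l3 h3
  have expand : f =
      C (a1*a2*a3) * ((X 0 : MvPolynomial (Fin 3) K)^3 * (X 1)^0 * (X 2)^0)
    + C (b1*b2*b3) * ((X 0)^0 * (X 1)^3 * (X 2)^0)
    + C (c1*c2*c3) * ((X 0)^0 * (X 1)^0 * (X 2)^3)
    + C (a1*a2*b3 + a1*b2*a3 + b1*a2*a3) * ((X 0)^2 * (X 1)^1 * (X 2)^0)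
    + C (a1*a2*c3 + a1*c2*a3 + c1*a2*a3) * ((X 0)^2 * (X 1)^0 * (X 2)^1)
    + C (a1*b2*b3 + b1*a2*b3 + b1*b2*a3) * ((X 0)^1 * (X 1)^2 * (X 2)^0)
    + C (b1*b2*c3 + b1*c2*b3 + c1*b2*b3) * ((X 0)^0 * (X 1)^2 * (X 2)^1)
    + C (a1*c2*c3 + c1*a2*c3 + c1*c2*a3) * ((X 0)^1 * (X 1)^0 * (X 2)^2)
    + C (b1*c2*c3 + c1*b2*c3 + c1*c2*b3) * ((X 0)^0 * (X 1)^1 * (X 2)^2)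
    + C (a1*b2*c3 + a1*c2*b3 + b1*a2*c3 + b1*c2*a3 + c1*a2*b3 + c1*b2*a3)
        * ((X 0)^1 * (X 1)^1 * (X 2)^1) := by
    rw [hfl, hl1, hl2, hl3]
    simp only [map_mul, map_add]
    ring
  have getc : ∀ p q r : ℕ, ¬ T 2 1 0 ≤ T p q r → ¬ T 0 2 1 ≤ T p q r →
      ¬ T 1 0 2 ≤ T p q r → coeff (T p q r) f = 0 := fun p q r u1 u2 u3 =>
    span_coeff hfI (T p q r) u1 u2 u3
  have nle : ∀ p q r p' q' r' : ℕ, (p' < p ∨ q' < q ∨ r' < r) → ¬ T p q r ≤ T p' q' r' := by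
    intro p q r p' q' r' h
    rcases h with h | h | h
    · exact not_T_le 0 (by rw [T_apply0, T_apply0]; exact h)
    · exact not_T_le 1 (by rw [T_apply1, T_apply1]; exact h)
    · exact not_T_le 2 (by rw [T_apply2, T_apply2]; exact h)
  have e1 : a1*a2*a3 = 0 := by
    have h := getc 3 0 0 (nle _ _ _ _ _ _ (by omega)) (nle _ _ _ _ _ _ (by omega))
      (nle _ _ _ _ _ _ (by omega))
    rw [expand] at h
    simp only [coeff_add, coeffT] at h
    norm_num [-mul_eq_zero] at h
    linear_combination h
  have e2 : b1*b2*b3 = 0 := by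
    have h := getc 0 3 0 (nle _ _ _ _ _ _ (by omega)) (nle _ _ _ _ _ _ (by omega))
      (nle _ _ _ _ _ _ (by omega))
    rw [expand] at h
    simp only [coeff_add, coeffT] at h
    norm_num [-mul_eq_zero] at h
    linear_combination h
  have e3 : c1*c2*c3 = 0 := by
    have h := getc 0 0 3 (nle _ _ _ _ _ _ (by omega)) (nle _ _ _ _ _ _ (by omega))
      (nle _ _ _ _ _ _ (by omega))
    rw [expand] at h
    simp only [coeff_add, coeffT] at h
    norm_num [-mul_eq_zero] at h
    linear_combination h
  have e4 : a1*a2*c3 + a1*c2*a3 + c1*a2*a3 = 0 := by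
    have h := getc 2 0 1 (nle _ _ _ _ _ _ (by omega)) (nle _ _ _ _ _ _ (by omega))
      (nle _ _ _ _ _ _ (by omega))
    rw [expand] at h
    simp only [coeff_add, coeffT] at h
    norm_num [-mul_eq_zero] at h
    linear_combination h
  have e5 : a1*b2*b3 + b1*a2*b3 + b1*b2*a3 = 0 := by
    have h := getc 1 2 0 (nle _ _ _ _ _ _ (by omega)) (nle _ _ _ _ _ _ (by omega))
      (nle _ _ _ _ _ _ (by omega))
    rw [expand] at h
    simp only [coeff_add, coeffT] at h
    norm_num [-mul_eq_zero] at h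
    linear_combination h
  have e6 : b1*c2*c3 + c1*b2*c3 + c1*c2*b3 = 0 := by
    have h := getc 0 1 2 (nle _ _ _ _ _ _ (by omega)) (nle _ _ _ _ _ _ (by omega))
      (nle _ _ _ _ _ _ (by omega))
    rw [expand] at h
    simp only [coeff_add, coeffT] at h
    norm_num [-mul_eq_zero] at h
    linear_combination h
  have e7 : a1*b2*c3 + a1*c2*b3 + b1*a2*c3 + b1*c2*a3 + c1*a2*b3 + c1*b2*a3 = 0 := by
    have h := getc 1 1 1 (nle _ _ _ _ _ _ (by omega)) (nle _ _ _ _ _ _ (by omega))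
      (nle _ _ _ _ _ _ (by omega))
    rw [expand] at h
    simp only [coeff_add, coeffT] at h
    norm_num [-mul_eq_zero] at h
    linear_combination h
  have hAB : (a1*a2*b3 + a1*b2*a3 + b1*a2*a3) * (b1*b2*c3 + b1*c2*b3 + c1*b2*b3) = 0 :=
    key _ _ _ _ _ _ _ _ _ e1 e2 e5
  have hBC : (b1*b2*c3 + b1*c2*b3 + c1*b2*b3) * (a1*c2*c3 + c1*a2*c3 + c1*c2*a3) = 0 := by
    have := key b1 b2 b3 c1 c2 c3 a1 a2 a3 e2 e3 (by linear_combination e6)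
    linear_combination this
  have hCA : (a1*c2*c3 + c1*a2*c3 + c1*c2*a3) * (a1*a2*b3 + a1*b2*a3 + b1*a2*a3) = 0 := by
    have := key c1 c2 c3 a1 a2 a3 b1 b2 b3 e3 e1 (by linear_combination e4)
    linear_combination this
  by_cases hA : a1*a2*b3 + a1*b2*a3 + b1*a2*a3 = 0
  · by_cases hB : b1*b2*c3 + b1*c2*b3 + c1*b2*b3 = 0
    · right; right
      refine ⟨a1*c2*c3 + c1*a2*c3 + c1*c2*a3, ?_⟩
      rw [expand, e1, e2, e3, e4, e5, e6, e7, hA, hB]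
      simp only [map_zero, zero_mul, add_zero, zero_add]
      ring
    · have hC : a1*c2*c3 + c1*a2*c3 + c1*c2*a3 = 0 :=
        (mul_eq_zero.mp hBC).resolve_left hB
      right; left
      refine ⟨b1*b2*c3 + b1*c2*b3 + c1*b2*b3, ?_⟩
      rw [expand, e1, e2, e3, e4, e5, e6, e7, hA, hC]
      simp only [map_zero, zero_mul, add_zero, zero_add]
      ring
  · have hB : b1*b2*c3 + b1*c2*b3 + c1*b2*b3 = 0 :=
      (mul_eq_zero.mp hAB).resolve_left hA
    have hC : a1*c2*c3 + c1*a2*c3 + c1*c2*a3 = 0 :=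
      (mul_eq_zero.mp hCA).resolve_right hA
    left
    refine ⟨a1*a2*b3 + a1*b2*a3 + b1*a2*a3, ?_⟩
    rw [expand, e1, e2, e3, e4, e5, e6, e7, hB, hC]
    simp only [map_zero, zero_mul, add_zero, zero_add]
    ring

open Pointwise in
lemma contra {f g : MvPolynomial (Fin 3) K} (A B : K) (hA : A ≠ 0) (v : Fin 3)
    (u w : MvPolynomial (Fin 3) K) (hu0 : u ≠ 0)
    (hf : f = C A * (X v * u)) (hg : g = C B * (X v * w))
    (hreg : IsSMulRegular (QuotSMulTop f (MvPolynomial (Fin 3) K)) g) : False := by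
  have hmem : g * u ∈ f • (⊤ : Submodule (MvPolynomial (Fin 3) K) (MvPolynomial (Fin 3) K)) := by
    have heq : g * u = f • (C (A⁻¹ * B) * w) := by
      rw [hf, hg, smul_eq_mul]
      have hCC : (C (A⁻¹ * B) : MvPolynomial (Fin 3) K) * C A = C B := by
        rw [← map_mul]
        congr 1
        field_simp
      calc C B * (X v * w) * u = (C (A⁻¹*B) * C A) * (X v * w * u) := by rw [hCC]; ring
        _ = C A * (X v * u) * (C (A⁻¹ * B) * w) := by ring
    rw [heq]
    exact Submodule.smul_mem_pointwise_smul _ _ _ Submodule.mem_top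
  have hzero : g • (Submodule.Quotient.mk u : QuotSMulTop f (MvPolynomial (Fin 3) K))
      = g • (0 : QuotSMulTop f (MvPolynomial (Fin 3) K)) := by
    rw [smul_zero, ← Submodule.Quotient.mk_smul]
    exact (Submodule.Quotient.mk_eq_zero _).mpr (by rw [smul_eq_mul]; exact hmem)
  have hmk := hreg hzero
  rw [Submodule.Quotient.mk_eq_zero] at hmk
  rw [← SetLike.mem_coe, Submodule.coe_pointwise_smul] at hmk
  obtain ⟨k, -, hk⟩ := hmk
  have hk2 : f * k = u := hk
  have hu : u * (1 - C A * X v * k) = 0 := by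
    rw [hf] at hk2
    linear_combination -hk2
  rcases mul_eq_zero.mp hu with h | h
  · exact hu0 h
  · have h1 : (1 : MvPolynomial (Fin 3) K) = C A * X v * k := by linear_combination h
    have hcc := congrArg constantCoeff h1
    simp [constantCoeff_X] at hcc

end Aux

theorem stmt11 {K : Type*} [Field K] :
    ¬ ∃ f g : MvPolynomial (Fin 3) K,
      f ∈ Ideal.span {(X 0) ^ 2 * X 1, (X 1) ^ 2 * X 2, X 0 * (X 2) ^ 2} ∧
      g ∈ Ideal.span {(X 0 : MvPolynomial (Fin 3) K) ^ 2 * X 1, (X 1) ^ 2 * X 2,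
        X 0 * (X 2) ^ 2} ∧
      (∃ l₁ l₂ l₃ : MvPolynomial (Fin 3) K,
        l₁.IsHomogeneous 1 ∧ l₂.IsHomogeneous 1 ∧ l₃.IsHomogeneous 1 ∧ f = l₁ * l₂ * l₃) ∧
      (∃ q₁ q₂ q₃ : MvPolynomial (Fin 3) K,
        q₁.IsHomogeneous 1 ∧ q₂.IsHomogeneous 1 ∧ q₃.IsHomogeneous 1 ∧ g = q₁ * q₂ * q₃) ∧
      RingTheory.Sequence.IsRegular (MvPolynomial (Fin 3) K) [f, g] := by
  rintro ⟨f, g, hfI, hgI, ⟨l1, l2, l3, h1, h2, h3, hfl⟩, ⟨q1, q2, q3, hq1, hq2, hq3, hgl⟩, hreg⟩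
  have hw := hreg.toIsWeaklyRegular
  rw [RingTheory.Sequence.isWeaklyRegular_cons_iff] at hw
  obtain ⟨hfreg, hw2⟩ := hw
  rw [RingTheory.Sequence.isWeaklyRegular_cons_iff] at hw2
  obtain ⟨hgreg, -⟩ := hw2
  have hf0 : f ≠ 0 := by
    rintro rfl
    have h01 : (0 : MvPolynomial (Fin 3) K) • (1 : MvPolynomial (Fin 3) K) = (0 : MvPolynomial (Fin 3) K) • (0 : MvPolynomial (Fin 3) K) := by simp
    exact one_ne_zero (hfreg h01)
  have hfc := classify hfI h1 h2 h3 hfl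
  have hgc := classify hgI hq1 hq2 hq3 hgl
  have hAne : ∀ (A : K) (m : MvPolynomial (Fin 3) K), f = C A * m → A ≠ 0 := by
    rintro A m hfm rfl
    exact hf0 (by rw [hfm]; simp)
  rcases hfc with ⟨A, hfm⟩ | ⟨A, hfm⟩ | ⟨A, hfm⟩ <;>
    rcases hgc with ⟨B, hgm⟩ | ⟨B, hgm⟩ | ⟨B, hgm⟩
  · exact contra A B (hAne A _ hfm) 0 (X 0 * X 1) (X 0 * X 1)
      (mul_ne_zero (X_ne_zero _) (X_ne_zero _))
      (by rw [hfm]; try ring) (by rw [hgm]; try ring) hgreg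
  · exact contra A B (hAne A _ hfm) 1 ((X 0)^2) (X 1 * X 2)
      (pow_ne_zero _ (X_ne_zero _))
      (by rw [hfm]; try ring) (by rw [hgm]; try ring) hgreg
  · exact contra A B (hAne A _ hfm) 0 (X 0 * X 1) ((X 2)^2)
      (mul_ne_zero (X_ne_zero _) (X_ne_zero _))
      (by rw [hfm]; try ring) (by rw [hgm]; try ring) hgreg
  · exact contra A B (hAne A _ hfm) 1 (X 1 * X 2) ((X 0)^2)
      (mul_ne_zero (X_ne_zero _) (X_ne_zero _))
      (by rw [hfm]; try ring) (by rw [hgm]; try ring) hgreg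
  · exact contra A B (hAne A _ hfm) 1 (X 1 * X 2) (X 1 * X 2)
      (mul_ne_zero (X_ne_zero _) (X_ne_zero _))
      (by rw [hfm]; try ring) (by rw [hgm]; try ring) hgreg
  · exact contra A B (hAne A _ hfm) 2 ((X 1)^2) (X 0 * X 2)
      (pow_ne_zero _ (X_ne_zero _))
      (by rw [hfm]; try ring) (by rw [hgm]; try ring) hgreg
  · exact contra A B (hAne A _ hfm) 0 ((X 2)^2) (X 0 * X 1)
      (pow_ne_zero _ (X_ne_zero _))
      (by rw [hfm]; try ring) (by rw [hgm]; try ring) hgreg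
  · exact contra A B (hAne A _ hfm) 2 (X 0 * X 2) ((X 1)^2)
      (mul_ne_zero (X_ne_zero _) (X_ne_zero _))
      (by rw [hfm]; try ring) (by rw [hgm]; try ring) hgreg
  · exact contra A B (hAne A _ hfm) 0 ((X 2)^2) ((X 2)^2)
      (pow_ne_zero _ (X_ne_zero _))
      (by rw [hfm]; try ring) (by rw [hgm]; try ring) hgreg
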